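/- Let m > 0, τ ≥ 1, η₀ > 0, and define η_t = τ / (τ/η₀ + m·t) for nonnegative integers t. Then for all t ≥ 1, (1 - m·η_t) · η_t^{-τ} ≤ η_{t-1}^{-τ}. -/
import Mathlib

theorem stmt_1 (m τ η₀ : ℝ) (hm : 0 < m) (hτ : 1 ≤ τ) (hη₀ : 0 < η₀)
    (η : ℕ → ℝ) (hη : ∀ t : ℕ, η t = τ / (τ / η₀ + m * t)) :
    ∀ t : ℕ, 1 ≤ t → (1 - m * η t) * (η t) ^ (-τ) ≤ (η (t - 1)) ^ (-τ) := by
  intro t ht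
  have hτ0 : (0:ℝ) < τ := lt_of_lt_of_le one_pos hτ
  set s : ℝ := τ / η₀ + m * t with hsdef
  have hd : (0:ℝ) < τ / η₀ := div_pos hτ0 hη₀
  have h1t : (1:ℝ) ≤ t := by exact_mod_cast ht
  have hmt : m ≤ m * t := by nlinarith
  have hs : 0 < s := by positivity
  have hsm : 0 < s - m := by rw [hsdef]; nlinarith
  have hηt : η t = τ / s := hη t
  have hηt1 : η (t - 1) = τ / (s - m) := by
    rw [hη (t-1), Nat.cast_sub ht, hsdef]
    ring_nf
  have key : 1 - m * (τ / s) ≤ ((s - m) / s) ^ τ := by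
    have h1 : (-1:ℝ) ≤ -(m / s) := by
      have : m / s ≤ 1 := by
        rw [div_le_one hs]; nlinarith
      linarith
    have := one_add_mul_self_le_rpow_one_add h1 hτ
    have he : (1:ℝ) + -(m / s) = (s - m) / s := by field_simp; ring
    rw [he] at this
    calc 1 - m * (τ / s) = 1 + τ * -(m / s) := by ring
    _ ≤ ((s - m) / s) ^ τ := this
  rw [hηt, hηt1]
  have hts : (0:ℝ) < τ / s := div_pos hτ0 hs
  have hts1 : (0:ℝ) < τ / (s - m) := div_pos hτ0 hsm
  rw [Real.rpow_neg hts.le, Real.rpow_neg hts1.le, ← Real.inv_rpow hts.le,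
    ← Real.inv_rpow hts1.le]
  have hinv : (τ / s)⁻¹ = s / τ := by field_simp
  have hinv1 : (τ / (s - m))⁻¹ = (s - m) / τ := by field_simp
  rw [hinv, hinv1]
  have hsplit : (s - m) / τ = ((s - m) / s) * (s / τ) := by
    field_simp
  rw [hsplit, Real.mul_rpow (by positivity) (by positivity)]
  exact mul_le_mul_of_nonneg_right key (Real.rpow_nonneg (by positivity) τ)
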